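/- Let n be even and let (λ₁, v) be a real eigenpair of the n×n real matrix A, where every component of v is nonzero. Let S = diag(v) and B = S^{-1} A S. For each j, let β_j be the (n/2)-th largest element among the n−1 off-diagonal entries b_{1j}, …, b_{j−1,j}, b_{j+1,j}, …, b_{nj} of column j of B, and let F = [f_{ij}] = [b_{ij} − β_j]. If λ is a complex eigenvalue of A with λ ≠ λ₁, then |λ| ≤ max_{1≤i≤n} (|f_{ii}| + r̂_i(F^T)), where r̂_i(F^T) is the radius of the i-th Gershgorin disc of the second type of F^T (computed from the i-th column of F). -/

import Mathlib

open Matrix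
open scoped ENNReal

/-- Non-increasing (descending) sort of a list of reals. -/
noncomputable def sortDesc (l : List ℝ) : List ℝ := (l.insertionSort (· ≤ ·)).reverse

/-- Given the descending rearrangement `l` of `n` numbers, the sum of the largest
(about) half minus the sum of the smallest (about) half, skipping the middle
element when `n` is odd. -/
noncomputable def halfSumDiff (n : ℕ) (l : List ℝ) : ℝ :=
  if n % 2 = 1 then (l.take ((n - 1) / 2)).sum - (l.drop ((n + 1) / 2)).sum
  else (l.take (n / 2)).sum - (l.drop (n / 2)).sum

/-- Radius of the `i`-th Gershgorin disc of the second type of `M`, computed from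
the `i`-th row of `M` with the diagonal entry replaced by `0`. -/
noncomputable def secondTypeRadius {n : ℕ} (M : Matrix (Fin n) (Fin n) ℝ) (i : Fin n) : ℝ :=
  halfSumDiff n (sortDesc (List.ofFn fun j : Fin n => if j = i then 0 else M i j))

/-- The `i`-th Gershgorin disc of the second type of `M`. -/
noncomputable def secondTypeDisc {n : ℕ} (M : Matrix (Fin n) (Fin n) ℝ) (i : Fin n) : Set ℂ :=
  Metric.closedBall ((M i i : ℝ) : ℂ) (secondTypeRadius M i)

/-- The Gershgorin region of the second type of `M`. -/
noncomputable def secondTypeRegion {n : ℕ} (M : Matrix (Fin n) (Fin n) ℝ) : Set ℂ :=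
  ⋃ i : Fin n, secondTypeDisc M i

/-- `μ` is a (complex) eigenvalue of the real matrix `A`, i.e. a complex root of
its characteristic polynomial. -/
def IsEigenvalueC {n : ℕ} (A : Matrix (Fin n) (Fin n) ℝ) (μ : ℂ) : Prop :=
  ((A.map ((↑) : ℝ → ℂ)).charpoly).IsRoot μ

/-- The `k`-th largest element (1-indexed) among the `n - 1` off-diagonal entries of
column `j` of `B`. -/
noncomputable def kthLargestOffDiag {n : ℕ} (B : Matrix (Fin n) (Fin n) ℝ) (j : Fin n)
    (k : ℕ) : ℝ :=
  (sortDesc (((List.ofFn fun i : Fin n => B i j).eraseIdx j.val))).getD (k - 1) 0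

/-- The ℓ_p norm of a vector in ℝ^n. -/
noncomputable def lpNorm {n : ℕ} (p : ℝ≥0∞) (x : Fin n → ℝ) : ℝ :=
  @norm (PiLp p fun _ : Fin n => ℝ) _ ((WithLp.equiv p (∀ _ : Fin n, ℝ)).symm x)

/-- The seminorm-like quantity `τ_p(B)`: the supremum of `‖Bᵀ x‖_p` over all real
vectors `x` with `xᵀ e = 0` and `‖x‖_p = 1`. -/
noncomputable def tau {n : ℕ} (p : ℝ≥0∞) (B : Matrix (Fin n) (Fin n) ℝ) : ℝ :=
  sSup { t : ℝ | ∃ x : Fin n → ℝ, (∑ i, x i) = 0 ∧ lpNorm p x = 1 ∧ t = lpNorm p (Bᵀ *ᵥ x) }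

/-- The Ostrowski–Brauer set `Γ(M)` of a real square matrix `M`. -/
noncomputable def brauerSet {n : ℕ} (M : Matrix (Fin n) (Fin n) ℝ) : Set ℂ :=
  ⋃ (i : Fin n) (j : Fin n) (_ : i < j),
    { y : ℂ | ‖y - (M i i : ℝ)‖ * ‖y - (M j j : ℝ)‖ ≤
        (∑ k ∈ Finset.univ.filter fun k => k ≠ i, |M i k|) *
        (∑ k ∈ Finset.univ.filter fun k => k ≠ j, |M j k|) }

/-- `cs_j(A)` from Definition 2.3: sorted column sums difference. -/
noncomputable def csCol {n : ℕ} (A : Matrix (Fin n) (Fin n) ℝ) (j : Fin n) : ℝ :=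
  halfSumDiff n (sortDesc (List.ofFn fun i : Fin n => A i j))

/- ### Auxiliary lemmas -/

theorem det_sub_smul_one_eq_zero {n : ℕ} (M : Matrix (Fin n) (Fin n) ℂ) {μ : ℂ}
    (h : M.charpoly.IsRoot μ) : (M - μ • 1).det = 0 := by
  have h0 : ((M.charmatrix).map (Polynomial.evalRingHom μ)).det = 0 := by
    have := RingHom.map_det (Polynomial.evalRingHom μ) M.charmatrix
    rw [RingHom.mapMatrix_apply] at this
    rw [← this]; exact h
  have hmap : (M.charmatrix).map (Polynomial.evalRingHom μ) = μ • 1 - M := by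
    ext i j
    by_cases hij : i = j
    · subst hij; simp [Matrix.charmatrix_apply_eq, Matrix.one_apply]
    · simp [Matrix.charmatrix_apply_ne _ _ _ hij, Matrix.one_apply, hij]
  have h1 : M - μ • 1 = -(μ • 1 - M) := by abel
  rw [h1, Matrix.det_neg]
  rw [hmap] at h0
  rw [h0, mul_zero]

theorem det_transfer {n : ℕ} (v : Fin n → ℝ) (hv : ∀ i, v i ≠ 0)
    (A S B : Matrix (Fin n) (Fin n) ℝ)
    (hS : S = Matrix.diagonal v) (hB : B = S⁻¹ * A * S) (μ : ℂ)
    (hd : ((A.map ((↑) : ℝ → ℂ)) - μ • 1).det = 0) :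
    ((B.map ((↑) : ℝ → ℂ)) - μ • 1).det = 0 := by
  have hSinv : S⁻¹ = Matrix.diagonal (fun i => (v i)⁻¹) := by
    apply Matrix.inv_eq_left_inv
    rw [hS, Matrix.diagonal_mul_diagonal]
    rw [show (fun i => (v i)⁻¹ * v i) = fun _ => (1:ℝ) from
      funext fun i => inv_mul_cancel₀ (hv i)]
    exact Matrix.diagonal_one
  set w : Fin n → ℂ := fun i => (v i : ℂ) with hw
  set Ac := A.map ((↑) : ℝ → ℂ) with hAc
  have hmm : ∀ (X Y : Matrix (Fin n) (Fin n) ℝ),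
      (X * Y).map ((↑) : ℝ → ℂ) = X.map ((↑) : ℝ → ℂ) * Y.map ((↑) : ℝ → ℂ) :=
    fun X Y => Matrix.map_mul (f := Complex.ofRealHom)
  have hdm : ∀ (d : Fin n → ℝ),
      (Matrix.diagonal d).map ((↑) : ℝ → ℂ) = Matrix.diagonal (fun i => (d i : ℂ)) :=
    fun d => Matrix.diagonal_map (by simp)
  have hBmap : B.map ((↑) : ℝ → ℂ) =
      Matrix.diagonal (fun i => (w i)⁻¹) * Ac * Matrix.diagonal w := by
    rw [hB, hSinv, hS, hmm, hmm, hdm, hdm]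
    congr 2
    ext i
    simp [hw]
  have hone : Matrix.diagonal (fun i => (w i)⁻¹) * Matrix.diagonal w = 1 := by
    rw [Matrix.diagonal_mul_diagonal,
      show (fun i => (w i)⁻¹ * w i) = fun _ => (1:ℂ) from
        funext fun i => inv_mul_cancel₀ (by simp [hw, hv i])]
    exact Matrix.diagonal_one
  have hsub : B.map ((↑) : ℝ → ℂ) - μ • 1 =
      Matrix.diagonal (fun i => (w i)⁻¹) * (Ac - μ • 1) * Matrix.diagonal w := by
    rw [hBmap, Matrix.mul_sub, Matrix.sub_mul, Matrix.mul_smul, Matrix.smul_mul,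
      Matrix.mul_one, hone]
  rw [hsub, Matrix.det_mul, Matrix.det_mul, hd, mul_zero, zero_mul]

lemma sortDesc_perm (l : List ℝ) : List.Perm (sortDesc l) l :=
  (l.insertionSort (· ≤ ·)).reverse_perm.trans (List.perm_insertionSort _ l)

lemma sortDesc_length (l : List ℝ) : (sortDesc l).length = l.length :=
  (sortDesc_perm l).length_eq

lemma sortDesc_pairwise (l : List ℝ) : (sortDesc l).Pairwise (· ≥ ·) := by
  rw [sortDesc, List.pairwise_reverse]
  exact List.pairwise_insertionSort (· ≤ ·) l

lemma sum_map_sub_const (l : List ℝ) (m : ℝ) :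
    (l.map (fun x => x - m)).sum = l.sum - l.length * m := by
  induction l with
  | nil => simp
  | cons a l ih => simp [ih]; ring

lemma sum_map_const_sub (l : List ℝ) (m : ℝ) :
    (l.map (fun x => m - x)).sum = l.length * m - l.sum := by
  induction l with
  | nil => simp
  | cons a l ih => simp [ih]; ring

lemma keyBound {n : ℕ} (hn : Even n) (hpos : 0 < n) (c : Fin n → ℝ) (t : Fin n → ℂ)
    (ht1 : ∀ j, ‖t j‖ ≤ 1) (ht0 : (∑ j, t j) = 0) :
    ‖∑ j, (c j : ℂ) * t j‖ ≤ halfSumDiff n (sortDesc (List.ofFn c)) := by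
  set L := sortDesc (List.ofFn c) with hLdef
  have hL : L.length = n := by rw [hLdef, sortDesc_length, List.length_ofFn]
  set h : ℕ := n / 2 with hh
  have h2 : n % 2 = 0 := Nat.even_iff.1 hn
  have hh1 : 1 ≤ h := by omega
  have hhn : h ≤ n := by omega
  have hnh : n - h = h := by omega
  have hh1n : h - 1 < L.length := by omega
  set m : ℝ := L[h-1] with hm
  have hpw := sortDesc_pairwise (List.ofFn c)
  rw [← hLdef, List.pairwise_iff_getElem] at hpw
  have hta : ∀ x ∈ L.take h, m ≤ x := by
    intro x hx
    obtain ⟨k, hk, hkx⟩ := List.mem_iff_getElem.1 hx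
    have hk' : k < h := by
      have := hk; rw [List.length_take] at this; omega
    have hkL : k < L.length := by omega
    have hxL : x = L[k] := by rw [← hkx, List.getElem_take]
    rcases Nat.lt_or_ge k (h-1) with hlt | hge
    · rw [hxL, hm]; exact hpw k (h-1) hkL hh1n hlt
    · have hke : k = h - 1 := by omega
      subst hke
      rw [hxL, hm]
  have hdr : ∀ x ∈ L.drop h, x ≤ m := by
    intro x hx
    obtain ⟨k, hk, hkx⟩ := List.mem_iff_getElem.1 hx
    have hkL : h + k < L.length := by rw [List.length_drop] at hk; omega
    have hxL : x = L[h + k]'hkL := by rw [← hkx]; exact List.getElem_drop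
    rw [hxL, hm]
    exact hpw (h-1) (h+k) hh1n hkL (by omega)
  have hstep1 : ‖∑ j, (c j : ℂ) * t j‖ ≤ ∑ j, |c j - m| := by
    have he : ∑ j, (c j : ℂ) * t j = ∑ j, ((c j - m : ℝ) : ℂ) * t j := by
      push_cast
      rw [show (∑ j, ((c j : ℂ) - (m:ℂ)) * t j) = (∑ j, (c j : ℂ) * t j) - (m:ℂ) * ∑ j, t j by
        rw [Finset.mul_sum, ← Finset.sum_sub_distrib]; congr 1; ext j; ring]
      rw [ht0, mul_zero, sub_zero]
    rw [he]
    refine le_trans (norm_sum_le _ _) ?_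
    apply Finset.sum_le_sum; intro j _
    rw [norm_mul, Complex.norm_real, Real.norm_eq_abs]
    exact mul_le_of_le_one_right (abs_nonneg _) (ht1 j)
  have hstep2 : (∑ j, |c j - m|) = (L.map (fun x => |x - m|)).sum := by
    rw [← List.sum_ofFn]
    have h3 : List.ofFn (fun j => |c j - m|) = (List.ofFn c).map (fun x => |x - m|) := by
      rw [List.map_ofFn]; rfl
    rw [h3]
    exact (((sortDesc_perm (List.ofFn c)).map _).sum_eq).symm
  have hsplit : (L.map (fun x => |x - m|)).sum = (L.take h).sum - (L.drop h).sum := by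
    have hLsplit : L.map (fun x => |x - m|) =
        ((L.take h).map fun x => |x - m|) ++ ((L.drop h).map fun x => |x - m|) := by
      rw [← List.map_append, List.take_append_drop]
    rw [hLsplit, List.sum_append]
    have h1 : ((L.take h).map fun x => |x - m|) = ((L.take h).map fun x => x - m) :=
      List.map_congr_left fun x hx => abs_of_nonneg (sub_nonneg.2 (hta x hx))
    have h2' : ((L.drop h).map fun x => |x - m|) = ((L.drop h).map fun x => m - x) :=
      List.map_congr_left fun x hx => by
        rw [abs_sub_comm]; exact abs_of_nonneg (sub_nonneg.2 (hdr x hx))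
    rw [h1, h2', sum_map_sub_const, sum_map_const_sub, List.length_take, List.length_drop,
      hL, hnh, min_eq_left hhn]
    ring
  have hhalf : halfSumDiff n L = (L.take h).sum - (L.drop h).sum := by
    rw [halfSumDiff, if_neg (by omega)]
  rw [hhalf, ← hsplit, ← hstep2]
  exact hstep1

/-- Theorem 7, even case bound (5): with `F` obtained from
`B = S⁻¹ A S` by Theorem 4, every eigenvalue `λ ≠ λ₁` of `A` satisfies
`|λ| ≤ max_i (|f_ii| + r̂_i(Fᵀ))`. -/
theorem stmt11 {n : ℕ} (hpos : 0 < n) (hn : Even n) (A : Matrix (Fin n) (Fin n) ℝ)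
    (lam1 : ℝ) (v : Fin n → ℝ) (hv : ∀ i, v i ≠ 0) (hAv : A *ᵥ v = lam1 • v)
    (S B : Matrix (Fin n) (Fin n) ℝ) (hS : S = Matrix.diagonal v) (hB : B = S⁻¹ * A * S)
    (F : Matrix (Fin n) (Fin n) ℝ)
    (hF : ∀ i j, F i j = B i j - kthLargestOffDiag B j (n / 2))
    (mu : ℂ) (hmu : IsEigenvalueC A mu) (hne : mu ≠ (lam1 : ℂ)) :
    ‖mu‖ ≤
      Finset.univ.sup' ⟨(⟨0, hpos⟩ : Fin n), Finset.mem_univ _⟩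
        (fun i => |F i i| + secondTypeRadius Fᵀ i) := by
  -- det of complexified A minus mu is zero, transfer to B, get left eigenvector y
  have hdA : ((A.map ((↑) : ℝ → ℂ)) - mu • 1).det = 0 :=
    det_sub_smul_one_eq_zero _ hmu
  have hdB : ((B.map ((↑) : ℝ → ℂ)) - mu • 1).det = 0 :=
    det_transfer v hv A S B hS hB mu hdA
  obtain ⟨y, hy0, hy⟩ : ∃ y : Fin n → ℂ, y ≠ 0 ∧ y ᵥ* (B.map ((↑) : ℝ → ℂ)) = mu • y := by
    obtain ⟨y, hy0, hy⟩ := Matrix.exists_vecMul_eq_zero_iff.2 hdB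
    refine ⟨y, hy0, ?_⟩
    rw [Matrix.vecMul_sub, sub_eq_zero] at hy
    rw [hy]; ext j
    simp [Matrix.vecMul, dotProduct, Matrix.one_apply, Finset.mul_sum, mul_comm]
  -- rows of B sum to lam1
  have hSinv : S⁻¹ = Matrix.diagonal (fun i => (v i)⁻¹) := by
    apply Matrix.inv_eq_left_inv
    rw [hS, Matrix.diagonal_mul_diagonal]
    rw [show (fun i => (v i)⁻¹ * v i) = fun _ => (1:ℝ) from
      funext fun i => inv_mul_cancel₀ (hv i)]
    exact Matrix.diagonal_one
  have hBone : B *ᵥ (fun _ => (1:ℝ)) = fun _ => lam1 := by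
    rw [hB, ← Matrix.mulVec_mulVec, ← Matrix.mulVec_mulVec]
    have h1 : S *ᵥ (fun _ => (1:ℝ)) = v := by
      ext i; rw [hS]; simp [Matrix.mulVec_diagonal]
    rw [h1, hAv, Matrix.mulVec_smul, hSinv]
    ext i
    simp [Matrix.mulVec_diagonal, inv_mul_cancel₀ (hv i)]
  have hrow : ∀ i, (∑ j, (B i j : ℂ)) = (lam1 : ℂ) := by
    intro i
    have := congrFun hBone i
    simp only [Matrix.mulVec, dotProduct, mul_one] at this
    rw [← this]
    push_cast
    rfl
  -- sum of y is zero
  have hysum : (∑ j, y j) = 0 := by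
    have h1 : mu * ∑ j, y j = (lam1 : ℂ) * ∑ j, y j := by
      calc mu * ∑ j, y j = ∑ j, (mu • y) j := by
            rw [Finset.mul_sum]; rfl
        _ = ∑ j, (y ᵥ* (B.map ((↑) : ℝ → ℂ))) j := by rw [hy]
        _ = ∑ j, ∑ i, y i * (B i j : ℂ) := by
            simp [Matrix.vecMul, dotProduct, Matrix.map_apply]
        _ = ∑ i, ∑ j, y i * (B i j : ℂ) := Finset.sum_comm
        _ = ∑ i, y i * (lam1 : ℂ) := by
            refine Finset.sum_congr rfl fun i _ => ?_
            rw [← Finset.mul_sum, hrow i]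
        _ = (lam1 : ℂ) * ∑ j, y j := by rw [← Finset.sum_mul, mul_comm]
    have h2 : (mu - (lam1 : ℂ)) * ∑ j, y j = 0 := by
      rw [sub_mul, h1, sub_self]
    rcases mul_eq_zero.1 h2 with h | h
    · exact absurd (sub_eq_zero.1 h) hne
    · exact h
  -- y is a left eigenvector of F
  have hyF : ∀ i, (∑ j, y j * (F j i : ℂ)) = mu * y i := by
    intro i
    have hBi : (∑ j, y j * (B j i : ℂ)) = mu * y i := by
      have := congrFun hy i
      simp only [Matrix.vecMul, dotProduct, Matrix.map_apply, Pi.smul_apply,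
        smul_eq_mul] at this
      exact this
    calc (∑ j, y j * (F j i : ℂ))
        = ∑ j, (y j * (B j i : ℂ) - (kthLargestOffDiag B i (n / 2) : ℂ) * y j) := by
          refine Finset.sum_congr rfl fun j _ => ?_
          rw [hF j i]; push_cast; ring
      _ = (∑ j, y j * (B j i : ℂ)) - (kthLargestOffDiag B i (n / 2) : ℂ) * ∑ j, y j := by
          rw [Finset.sum_sub_distrib, Finset.mul_sum]
      _ = mu * y i := by rw [hBi, hysum, mul_zero, sub_zero]
  -- pick the index with maximal |y i|
  obtain ⟨i, _, himax⟩ := Finset.exists_max_image Finset.univ (fun j => ‖y j‖)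
    ⟨⟨0, hpos⟩, Finset.mem_univ _⟩
  have hyi : y i ≠ 0 := by
    obtain ⟨k, hk⟩ := Function.ne_iff.1 hy0
    intro h0
    have hk' : ‖y k‖ ≤ 0 := by
      have := himax k (Finset.mem_univ k)
      rwa [h0, norm_zero] at this
    exact hk (by simpa using le_antisymm hk' (norm_nonneg _))
  set c : Fin n → ℝ := fun j => if j = i then 0 else F j i with hc
  set t : Fin n → ℂ := fun j => y j / y i with htdef
  have ht1 : ∀ j, ‖t j‖ ≤ 1 := by
    intro j
    rw [htdef]
    simp only [norm_div]
    rw [div_le_one (norm_pos_iff.2 hyi)]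
    · exact himax j (Finset.mem_univ _)
  have ht0 : (∑ j, t j) = 0 := by
    rw [htdef, ← Finset.sum_div, hysum, zero_div]
  have hct : (∑ j, (c j : ℂ) * t j) = mu - (F i i : ℂ) := by
    have hcy : (∑ j, (c j : ℂ) * y j) = mu * y i - (F i i : ℂ) * y i := by
      have hterm : ∀ j, (c j : ℂ) * y j =
          y j * (F j i : ℂ) - (if j = i then (F i i : ℂ) * y i else 0) := by
        intro j
        by_cases hji : j = i
        · subst hji; simp [hc]; ring
        · simp [hc, hji]; ring
      rw [Finset.sum_congr rfl fun j _ => hterm j, Finset.sum_sub_distrib,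
        Finset.sum_ite_eq' Finset.univ i, if_pos (Finset.mem_univ i), hyF i]
    calc (∑ j, (c j : ℂ) * t j) = (∑ j, (c j : ℂ) * y j) / y i := by
          rw [Finset.sum_div]
          refine Finset.sum_congr rfl fun j _ => ?_
          rw [htdef, mul_div_assoc]
      _ = mu - (F i i : ℂ) := by
          rw [hcy, sub_div, mul_div_assoc, mul_div_assoc, div_self hyi, mul_one, mul_one]
  have hrad : secondTypeRadius Fᵀ i = halfSumDiff n (sortDesc (List.ofFn c)) := by
    rw [secondTypeRadius]
    congr 1
  have hkey : ‖mu - (F i i : ℂ)‖ ≤ secondTypeRadius Fᵀ i := by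
    rw [← hct, hrad]
    exact keyBound hn hpos c t ht1 ht0
  have hfinal : ‖mu‖ ≤ |F i i| + secondTypeRadius Fᵀ i := by
    calc ‖mu‖ = ‖(F i i : ℂ) + (mu - (F i i : ℂ))‖ := by ring_nf
      _ ≤ ‖(F i i : ℂ)‖ + ‖mu - (F i i : ℂ)‖ :=
          norm_add_le _ _
      _ ≤ |F i i| + secondTypeRadius Fᵀ i := by
          rw [Complex.norm_real, Real.norm_eq_abs]
          exact add_le_add_right hkey _
  exact le_trans hfinal (Finset.le_sup' (fun i => |F i i| + secondTypeRadius Fᵀ i) (Finset.mem_univ i))
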